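/- Let n ≥ 2 be an integer and λ_1, λ_2, …, λ_{2n} reals. Let V be the 2n×2n block matrix [[V11, V12],[V21, V22]] with V11 = (1/√2)·E_{1,1} + ∑_{i=2}^n E_{i,i}, V12 = (1/√2)·E_{1,1}, V21 = (1/√2)·E_{n,1}, V22 = −(1/√2)·E_{n,1} + ∑_{i=1}^{n−1} E_{i,i+1}. Then V·diag(λ_1,…,λ_{2n})·Vᵀ = ρ'_Λ, the X-matrix whose entries are (ρ'_Λ)_{1,1} = (ρ'_Λ)_{2n,2n} = (λ_1+λ_{n+1})/2, (ρ'_Λ)_{1,2n} = (ρ'_Λ)_{2n,1} = (λ_1−λ_{n+1})/2, (ρ'_Λ)_{j,j} = λ_j and (ρ'_Λ)_{2n+1−j,2n+1−j} = λ_{2n+2−j} for 2 ≤ j ≤ n, and all other entries zero. -/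

import Mathlib

set_option maxHeartbeats 1000000



/-- The `2n × 2n` block matrix `V = [[V11, V12], [V21, V22]]` with (0-based entries)
`V11 = (1/√2)E_{1,1} + ∑_{i=2}^n E_{i,i}`, `V12 = (1/√2)E_{1,1}`, `V21 = (1/√2)E_{n,1}`,
`V22 = -(1/√2)E_{n,1} + ∑_{i=1}^{n-1} E_{i,i+1}`. -/
noncomputable def Vmat (n : ℕ) : Matrix (Fin (2 * n)) (Fin (2 * n)) ℝ :=
  Matrix.of fun i j =>
    if i.val = 0 ∧ j.val = 0 then 1 / Real.sqrt 2
    else if i.val = 0 ∧ j.val = n then 1 / Real.sqrt 2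
    else if i.val = 2 * n - 1 ∧ j.val = 0 then 1 / Real.sqrt 2
    else if i.val = 2 * n - 1 ∧ j.val = n then -(1 / Real.sqrt 2)
    else if i = j ∧ 1 ≤ i.val ∧ i.val ≤ n - 1 then 1
    else if n ≤ i.val ∧ i.val ≤ 2 * n - 2 ∧ j.val = i.val + 1 then 1
    else 0

/-- The X-matrix `ρ'_Λ` built from a spectrum `lam` (0-based: `λ_k = lam (k-1)`). -/
noncomputable def rhoPrime (n : ℕ) (lam : ℕ → ℝ) :
    Matrix (Fin (2 * n)) (Fin (2 * n)) ℝ :=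
  Matrix.of fun i j =>
    if (i.val = 0 ∧ j.val = 0) ∨ (i.val = 2 * n - 1 ∧ j.val = 2 * n - 1) then
      (lam 0 + lam n) / 2
    else if (i.val = 0 ∧ j.val = 2 * n - 1) ∨ (i.val = 2 * n - 1 ∧ j.val = 0) then
      (lam 0 - lam n) / 2
    else if i = j ∧ 1 ≤ i.val ∧ i.val ≤ n - 1 then lam i.val
    else if i = j ∧ n ≤ i.val ∧ i.val ≤ 2 * n - 2 then lam (i.val + 1)
    else 0

lemma Vmat_apply (n : ℕ) (hn : 2 ≤ n) (i j : Fin (2 * n)) :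
    Vmat n i j =
      if i.val = 0 then
        (if j.val = 0 then 1 / Real.sqrt 2 else if j.val = n then 1 / Real.sqrt 2 else 0)
      else if i.val = 2 * n - 1 then
        (if j.val = 0 then 1 / Real.sqrt 2 else if j.val = n then -(1 / Real.sqrt 2) else 0)
      else if i.val ≤ n - 1 then (if j.val = i.val then 1 else 0)
      else (if j.val = i.val + 1 then 1 else 0) := by
  have hi := i.isLt
  have hj := j.isLt
  simp only [Vmat, Matrix.of_apply, Fin.ext_iff]
  split_ifs <;> first | rfl | omega

lemma sum_eq_pair {M : Type*} [AddCommMonoid M] {α : Type*} [Fintype α] [DecidableEq α]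
    (a b : α) (hab : a ≠ b) (f : α → M) (h : ∀ c, c ≠ a → c ≠ b → f c = 0) :
    ∑ c, f c = f a + f b := by
  rw [← Finset.sum_pair hab]
  exact (Finset.sum_subset (Finset.subset_univ _) (fun x _ hx => by
    simp only [Finset.mem_insert, Finset.mem_singleton, not_or] at hx
    exact h x hx.1 hx.2)).symm

/-- Conjugating the diagonal matrix `diag(λ_1, …, λ_{2n})` by the orthogonal matrix `V`
produces the X-matrix `ρ'_Λ`: `V · diag(λ) · Vᵀ = ρ'_Λ`. -/
theorem Vmat_diagonal_conj (n : ℕ) (hn : 2 ≤ n) (lam : ℕ → ℝ) :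
    Vmat n * Matrix.diagonal (fun i : Fin (2 * n) => lam i.val) * (Vmat n).transpose =
      rhoPrime n lam := by
  ext i j
  have hi := i.isLt
  have hj := j.isLt
  have hsum : (Vmat n * Matrix.diagonal (fun i : Fin (2 * n) => lam i.val) *
      (Vmat n).transpose) i j
      = ∑ k : Fin (2 * n), Vmat n i k * lam k.val * Vmat n j k := by
    rw [Matrix.mul_apply]
    refine Finset.sum_congr rfl fun k _ => ?_
    rw [Matrix.mul_diagonal, Matrix.transpose_apply]
  rw [hsum]
  have h2 : Real.sqrt 2 * Real.sqrt 2 = 2 := Real.mul_self_sqrt (by norm_num)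
  have hne : Real.sqrt 2 ≠ 0 := by positivity
  have hinv : (Real.sqrt 2)⁻¹ ^ 2 = 1 / 2 := by
    rw [sq, ← mul_inv, h2]; norm_num
  have h0n : (⟨0, by omega⟩ : Fin (2 * n)) ≠ ⟨n, by omega⟩ := by
    simp only [ne_eq, Fin.mk.injEq]; omega
  by_cases hi0 : i.val = 0
  · have hzero : ∀ k : Fin (2 * n), k ≠ ⟨0, by omega⟩ → k ≠ ⟨n, by omega⟩ →
        Vmat n i k * lam k.val * Vmat n j k = 0 := by
      intro k hk0 hkn
      have h1 : k.val ≠ 0 := by simpa [Fin.ext_iff] using hk0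
      have h2' : k.val ≠ n := by simpa [Fin.ext_iff] using hkn
      simp [Vmat_apply n hn, hi0, h1, h2']
    rw [sum_eq_pair _ _ h0n _ hzero]
    simp only [Vmat_apply n hn, rhoPrime, Matrix.of_apply, Fin.ext_iff, Fin.val_mk]
    split_ifs <;> first | contradiction | omega | ring1 | (field_simp; all_goals first | ring1 | (rw [hinv]; ring1) | (rw [Real.sq_sqrt (by norm_num : (0:ℝ) ≤ 2)]; ring1))
  · by_cases hiL : i.val = 2 * n - 1
    · have hzero : ∀ k : Fin (2 * n), k ≠ ⟨0, by omega⟩ → k ≠ ⟨n, by omega⟩ →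
          Vmat n i k * lam k.val * Vmat n j k = 0 := by
        intro k hk0 hkn
        have h1 : k.val ≠ 0 := by simpa [Fin.ext_iff] using hk0
        have h2' : k.val ≠ n := by simpa [Fin.ext_iff] using hkn
        simp [Vmat_apply n hn, hi0, hiL, h1, h2']
      rw [sum_eq_pair _ _ h0n _ hzero]
      simp only [Vmat_apply n hn, rhoPrime, Matrix.of_apply, Fin.ext_iff, Fin.val_mk]
      split_ifs <;> first | contradiction | omega | ring1 | (field_simp; all_goals first | ring1 | (rw [hinv]; ring1) | (rw [Real.sq_sqrt (by norm_num : (0:ℝ) ≤ 2)]; ring1))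
    · by_cases him : i.val ≤ n - 1
      · rw [Fintype.sum_eq_single i (fun k hk => by
          have h1 : k.val ≠ i.val := by simpa [Fin.ext_iff, eq_comm] using hk
          simp [Vmat_apply n hn, hi0, hiL, him, h1])]
        simp only [Vmat_apply n hn, rhoPrime, Matrix.of_apply, Fin.ext_iff, Fin.val_mk]
        split_ifs <;> first | contradiction | omega | ring1
      · rw [Fintype.sum_eq_single (⟨i.val + 1, by omega⟩ : Fin (2 * n)) (fun k hk => by
          have h1 : k.val ≠ i.val + 1 := by simpa [Fin.ext_iff] using hk
          simp [Vmat_apply n hn, hi0, hiL, him, h1])]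
        simp only [Vmat_apply n hn, rhoPrime, Matrix.of_apply, Fin.ext_iff, Fin.val_mk]
        split_ifs <;> first | contradiction | omega | ring1
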